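/- Let I be a homogeneous ideal in S = k[x_0,...,x_r] and τ an elimination order for x_0. Then for every p, K_p(in_τ(I)) = in_{τ_0}(K_p(I)), i.e., taking partial elimination ideals commutes with taking initial ideals. -/

import Mathlib

open MvPolynomial

/-- A finite graded free resolution of a (homogeneous) ideal `I` in a polynomial ring. -/
structure GradedFreeRes {k : Type*} [Field k] {N : ℕ}
    (I : Ideal (MvPolynomial (Fin N) k)) where
  rk : ℕ → ℕ
  shift : (i : ℕ) → Fin (rk i) → ℕ
  len : ℕ
  rk_eq_zero : ∀ i, len < i → rk i = 0
  gen : Fin (rk 0) → MvPolynomial (Fin N) k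
  gen_hom : ∀ j, (gen j).IsHomogeneous (shift 0 j)
  mat : (i : ℕ) → Matrix (Fin (rk i)) (Fin (rk (i + 1))) (MvPolynomial (Fin N) k)
  mat_hom : ∀ i a b, mat i a b = 0 ∨
    (shift i a ≤ shift (i + 1) b ∧ (mat i a b).IsHomogeneous (shift (i + 1) b - shift i a))
  aug_surj : LinearMap.range
    (Fintype.linearCombination (MvPolynomial (Fin N) k) gen) = I
  aug_exact : LinearMap.range (mat 0).mulVecLin =
    LinearMap.ker
      (Fintype.linearCombination (MvPolynomial (Fin N) k) gen)
  complex_exact : ∀ i,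
    LinearMap.range (mat (i + 1)).mulVecLin = LinearMap.ker (mat i).mulVecLin

/-- The Castelnuovo–Mumford regularity of a homogeneous ideal, defined as the minimum over
all finite graded free resolutions of `I` of the maximum of `shift i j - i`. -/
noncomputable def cmReg {k : Type*} [Field k] {N : ℕ}
    (I : Ideal (MvPolynomial (Fin N) k)) : ℕ :=
  sInf { d | ∃ R : GradedFreeRes I, ∀ i, ∀ j : Fin (R.rk i), R.shift i j ≤ d + i }

/-- The leading exponent (degree) of a polynomial with respect to a monomial order. -/
noncomputable def ldeg {k : Type*} [Field k] {N : ℕ} (τ : MonomialOrder (Fin N))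
    (f : MvPolynomial (Fin N) k) : Fin N →₀ ℕ :=
  τ.toSyn.symm (f.support.sup fun m => τ.toSyn m)

/-- The initial ideal of `I` with respect to a monomial order `τ`. -/
noncomputable def initialIdeal {k : Type*} [Field k] {N : ℕ} (τ : MonomialOrder (Fin N))
    (I : Ideal (MvPolynomial (Fin N) k)) : Ideal (MvPolynomial (Fin N) k) :=
  Ideal.span { q | ∃ f ∈ I, f ≠ 0 ∧ q = monomial (ldeg τ f) (1 : k) }

/-- A homogeneous ideal: one containing all homogeneous components of its elements. -/
def IsHomogeneousIdeal {k : Type*} [Field k] {N : ℕ}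
    (I : Ideal (MvPolynomial (Fin N) k)) : Prop :=
  ∀ f ∈ I, ∀ d : ℕ, homogeneousComponent d f ∈ I

/-- The `p`-th partial elimination ideal (as a set): leading coefficients with respect to the
variable `x₀` of the elements of `I` of `x₀`-degree `p`, together with `0`. -/
noncomputable def pelimSet {k : Type*} [Field k] {N : ℕ}
    (I : Ideal (MvPolynomial (Fin (N + 1)) k)) (p : ℕ) :
    Set (MvPolynomial (Fin N) k) :=
  insert 0 { h | ∃ f ∈ I, f ≠ 0 ∧ (finSuccEquiv k N f).natDegree = p ∧
    (finSuccEquiv k N f).leadingCoeff = h }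

/-- An elimination order for the first variable: any monomial involving `x₀` is larger than
any monomial not involving `x₀`. -/
def IsElimOrder {N : ℕ} (τ : MonomialOrder (Fin (N + 1))) : Prop :=
  ∀ a b : Fin (N + 1) →₀ ℕ, a 0 = 0 → b 0 ≠ 0 → τ.toSyn a < τ.toSyn b

/-- `τ₀` is the restriction of `τ` to the last `N` variables. -/
def InducedOrder {N : ℕ} (τ : MonomialOrder (Fin (N + 1))) (τ₀ : MonomialOrder (Fin N)) : Prop :=
  ∀ a b : Fin N →₀ ℕ,
    τ₀.toSyn a ≤ τ₀.toSyn b ↔ τ.toSyn (a.mapDomain Fin.succ) ≤ τ.toSyn (b.mapDomain Fin.succ)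

/-- The linear change of coordinates on a polynomial ring given by a matrix. -/
noncomputable def coordChange {k : Type*} [Field k] {N : ℕ}
    (g : Matrix (Fin N) (Fin N) k) :
    MvPolynomial (Fin N) k →ₐ[k] MvPolynomial (Fin N) k :=
  aeval fun i => ∑ j, C (g i j) * X j

/-- `J` is the generic initial ideal of `I` with respect to `τ`: for every change of
coordinates `g` in a nonempty Zariski-open subset of `GL_N`, the initial ideal of `g · I`
is `J`. -/
noncomputable def IsGin {k : Type*} [Field k] {N : ℕ} (τ : MonomialOrder (Fin N))
    (I J : Ideal (MvPolynomial (Fin N) k)) : Prop :=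
  ∃ P : MvPolynomial (Fin N × Fin N) k, P ≠ 0 ∧
    ∀ g : Matrix (Fin N) (Fin N) k, IsUnit g.det →
      eval (fun q => g q.1 q.2) P ≠ 0 →
        initialIdeal τ (Ideal.map (coordChange g).toRingHom I) = J

namespace PelimAux

variable {k : Type*} [Field k] {N : ℕ}

lemma toSyn_ldeg (τ : MonomialOrder (Fin N)) (f : MvPolynomial (Fin N) k) :
    τ.toSyn (ldeg τ f) = f.support.sup fun m => τ.toSyn m := by
  simp [ldeg]

lemma ldeg_mem_support (τ : MonomialOrder (Fin N)) {f : MvPolynomial (Fin N) k} (hf : f ≠ 0) :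
    ldeg τ f ∈ f.support := by
  obtain ⟨b, hb, he⟩ := Finset.exists_mem_eq_sup f.support
    (MvPolynomial.support_nonempty.2 hf) (fun m => τ.toSyn m)
  have : ldeg τ f = b := by rw [ldeg, he, AddEquiv.symm_apply_apply]
  rwa [this]

lemma le_toSyn_ldeg (τ : MonomialOrder (Fin N)) {f : MvPolynomial (Fin N) k}
    {m : Fin N →₀ ℕ} (hm : m ∈ f.support) : τ.toSyn m ≤ τ.toSyn (ldeg τ f) := by
  rw [toSyn_ldeg]; exact Finset.le_sup hm

lemma ldeg_eq (τ : MonomialOrder (Fin N)) {f : MvPolynomial (Fin N) k} {e : Fin N →₀ ℕ}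
    (he : e ∈ f.support) (hmax : ∀ m ∈ f.support, τ.toSyn m ≤ τ.toSyn e) :
    ldeg τ f = e := by
  apply τ.toSyn.injective
  rw [toSyn_ldeg]
  exact le_antisymm (Finset.sup_le hmax) (Finset.le_sup he)

lemma mapDomain_succ_apply_zero (m : Fin N →₀ ℕ) :
    (m.mapDomain Fin.succ) 0 = 0 := by
  rw [Finsupp.mapDomain_notin_range]
  simp [Set.range, Fin.succ_ne_zero]

lemma cons_eq_single_add (i : ℕ) (m : Fin N →₀ ℕ) :
    Finsupp.cons i m = Finsupp.single (0 : Fin (N + 1)) i + m.mapDomain Fin.succ := by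
  ext j
  refine Fin.cases ?_ (fun j => ?_) j
  · rw [Finsupp.cons_zero, Finsupp.add_apply, Finsupp.single_eq_same,
      mapDomain_succ_apply_zero, add_zero]
  · rw [Finsupp.cons_succ, Finsupp.add_apply,
      Finsupp.single_eq_of_ne' (Fin.succ_ne_zero j).symm,
      Finsupp.mapDomain_apply (Fin.succ_injective N), zero_add]

lemma finSuccEquiv_ne_zero {f : MvPolynomial (Fin (N + 1)) k} (hf : f ≠ 0) :
    finSuccEquiv k N f ≠ 0 := by
  intro h
  exact hf ((map_eq_zero_iff _ (finSuccEquiv k N).injective).1 h)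

/-- Key structure lemma. -/
lemma ldeg_cons {τ : MonomialOrder (Fin (N + 1))} {τ₀ : MonomialOrder (Fin N)}
    (helim : IsElimOrder τ) (hind : InducedOrder τ τ₀)
    {f : MvPolynomial (Fin (N + 1)) k} (hf : f ≠ 0) :
    ldeg τ f = Finsupp.cons (finSuccEquiv k N f).natDegree
      (ldeg τ₀ (finSuccEquiv k N f).leadingCoeff) := by
  set F := finSuccEquiv k N f with hF
  set p := F.natDegree with hp
  set h := F.leadingCoeff with hh
  have hF0 : F ≠ 0 := finSuccEquiv_ne_zero hf
  have hh0 : h ≠ 0 := Polynomial.leadingCoeff_ne_zero.2 hF0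
  have hcp : F.coeff p = h := rfl
  apply ldeg_eq
  · rw [← mem_support_coeff_finSuccEquiv (i := p)]
    rw [← hF, hcp]
    exact ldeg_mem_support τ₀ hh0
  · intro m hm
    have hmc : Finsupp.cons (m 0) (Finsupp.tail m) = m := Finsupp.cons_tail m
    have ht : Finsupp.tail m ∈ (F.coeff (m 0)).support := by
      rw [hF, mem_support_coeff_finSuccEquiv, hmc]
      exact hm
    have hq : m 0 ≤ p := Polynomial.le_natDegree_of_ne_zero
      (fun h0 => by rw [h0] at ht; simp at ht)
    rcases eq_or_lt_of_le hq with hqe | hql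
    · -- m 0 = p
      have ht' : Finsupp.tail m ∈ h.support := by rwa [hqe, hcp] at ht
      have h1 : τ₀.toSyn (Finsupp.tail m) ≤ τ₀.toSyn (ldeg τ₀ h) := le_toSyn_ldeg τ₀ ht'
      have h2 := (hind _ _).1 h1
      calc τ.toSyn m = τ.toSyn (Finsupp.single 0 p) +
            τ.toSyn ((Finsupp.tail m).mapDomain Fin.succ) := by
            rw [← map_add, ← cons_eq_single_add, ← hqe, hmc]
          _ ≤ τ.toSyn (Finsupp.single 0 p) +
            τ.toSyn ((ldeg τ₀ h).mapDomain Fin.succ) := by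
            exact add_le_add_right h2 _
          _ = τ.toSyn (Finsupp.cons p (ldeg τ₀ h)) := by
            rw [← map_add, ← cons_eq_single_add]
    · -- m 0 < p
      have hkey : τ.toSyn ((Finsupp.tail m).mapDomain Fin.succ) <
          τ.toSyn (Finsupp.single (0 : Fin (N + 1)) (p - m 0) +
            (ldeg τ₀ h).mapDomain Fin.succ) := by
        apply helim
        · exact mapDomain_succ_apply_zero _
        · rw [Finsupp.add_apply, Finsupp.single_eq_same, mapDomain_succ_apply_zero, add_zero]
          exact Nat.sub_ne_zero_of_lt hql
      have hsingle : Finsupp.single (0 : Fin (N + 1)) (m 0) +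
          Finsupp.single (0 : Fin (N + 1)) (p - m 0) = Finsupp.single 0 p := by
        rw [← Finsupp.single_add, Nat.add_sub_cancel' hq]
      apply le_of_lt
      calc τ.toSyn m = τ.toSyn (Finsupp.single 0 (m 0)) +
            τ.toSyn ((Finsupp.tail m).mapDomain Fin.succ) := by
            rw [← map_add, ← cons_eq_single_add, hmc]
          _ < τ.toSyn (Finsupp.single 0 (m 0)) +
            τ.toSyn (Finsupp.single (0 : Fin (N + 1)) (p - m 0) +
              (ldeg τ₀ h).mapDomain Fin.succ) := by
            exact add_lt_add_right hkey _
          _ = τ.toSyn (Finsupp.cons p (ldeg τ₀ h)) := by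
            rw [← map_add, ← add_assoc, hsingle, ← cons_eq_single_add]

lemma finSuccEquiv_rename_succ (c : MvPolynomial (Fin N) k) :
    finSuccEquiv k N (rename Fin.succ c) = Polynomial.C c := by
  induction c using MvPolynomial.induction_on with
  | C a => simp [finSuccEquiv_apply]
  | add p q hp hq => simp [hp, hq]
  | mul_X p j hp => simp [hp, finSuccEquiv_X_succ]

/-- `pelimSet I p` is an ideal. -/
noncomputable def pelimIdeal (I : Ideal (MvPolynomial (Fin (N + 1)) k)) (p : ℕ) :
    Ideal (MvPolynomial (Fin N) k) where
  carrier := pelimSet I p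
  zero_mem' := Set.mem_insert 0 _
  add_mem' := by
    rintro a b ha hb
    rcases ha with rfl | ⟨f, hfI, hf0, hfd, hfl⟩
    · simpa using hb
    rcases hb with rfl | ⟨g, hgI, hg0, hgd, hgl⟩
    · rw [add_zero]; exact Or.inr ⟨f, hfI, hf0, hfd, hfl⟩
    by_cases hab : a + b = 0
    · rw [hab]; exact Set.mem_insert 0 _
    have hca : (finSuccEquiv k N f).coeff p = a := by
      rw [← hfd, ← Polynomial.leadingCoeff, hfl]
    have hcb : (finSuccEquiv k N g).coeff p = b := by
      rw [← hgd, ← Polynomial.leadingCoeff, hgl]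
    have hcoeff : (finSuccEquiv k N (f + g)).coeff p = a + b := by
      rw [map_add, Polynomial.coeff_add, hca, hcb]
    have hfg0 : f + g ≠ 0 := by
      intro h0
      rw [h0, map_zero, Polynomial.coeff_zero] at hcoeff
      exact hab hcoeff.symm
    have hdeg : (finSuccEquiv k N (f + g)).natDegree = p := by
      apply le_antisymm
      · rw [map_add]
        refine le_trans (Polynomial.natDegree_add_le _ _) ?_
        rw [hfd, hgd, max_self]
      · exact Polynomial.le_natDegree_of_ne_zero (by rw [hcoeff]; exact hab)
    right
    exact ⟨f + g, I.add_mem hfI hgI, hfg0, hdeg,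
      by rw [Polynomial.leadingCoeff, hdeg, hcoeff]⟩
  smul_mem' := by
    rintro c x hx
    rcases hx with rfl | ⟨f, hfI, hf0, hfd, hfl⟩
    · simp [pelimSet]
    by_cases hc : c = 0
    · simp [hc, pelimSet]
    right
    have hF0 : finSuccEquiv k N f ≠ 0 := finSuccEquiv_ne_zero hf0
    have key : finSuccEquiv k N (rename Fin.succ c * f) =
        Polynomial.C c * finSuccEquiv k N f := by
      rw [map_mul, finSuccEquiv_rename_succ]
    refine ⟨rename Fin.succ c * f, I.mul_mem_left _ hfI, ?_, ?_, ?_⟩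
    · intro h0
      rw [h0, map_zero] at key
      exact hc (Polynomial.C_eq_zero.1 (by
        rcases mul_eq_zero.1 key.symm with h | h
        · exact h
        · exact absurd h hF0))
    · rw [key, Polynomial.natDegree_mul (Polynomial.C_ne_zero.2 hc) hF0,
        Polynomial.natDegree_C, zero_add, hfd]
    · rw [key, Polynomial.leadingCoeff_mul, Polynomial.leadingCoeff_C, hfl, smul_eq_mul]

lemma span_pelimSet (I : Ideal (MvPolynomial (Fin (N + 1)) k)) (p : ℕ) :
    Ideal.span (pelimSet I p) = pelimIdeal I p :=
  Ideal.span_eq (pelimIdeal I p)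

lemma mem_pelimSet_of_mem_span {I : Ideal (MvPolynomial (Fin (N + 1)) k)} {p : ℕ}
    {h : MvPolynomial (Fin N) k} (hh : h ∈ Ideal.span (pelimSet I p)) :
    h ∈ pelimSet I p := by
  rwa [span_pelimSet] at hh

lemma initialIdeal_eq_span_image (τ : MonomialOrder (Fin N))
    (I : Ideal (MvPolynomial (Fin N) k)) :
    initialIdeal τ I = Ideal.span ((fun s => monomial s (1 : k)) ''
      {s | ∃ f ∈ I, f ≠ 0 ∧ s = ldeg τ f}) := by
  unfold initialIdeal
  congr 1
  ext q
  constructor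
  · rintro ⟨f, hf, h0, rfl⟩
    exact ⟨ldeg τ f, ⟨f, hf, h0, rfl⟩, rfl⟩
  · rintro ⟨s, ⟨f, hf, h0, rfl⟩, rfl⟩
    exact ⟨f, hf, h0, rfl⟩

lemma cons_inj_iff {i j : ℕ} {m m' : Fin N →₀ ℕ} :
    Finsupp.cons i m = Finsupp.cons j m' ↔ i = j ∧ m = m' := by
  constructor
  · intro h
    have h0 : i = j := by
      have := congrArg (fun x => x 0) h
      simpa [Finsupp.cons_zero] using this
    have ht := congrArg Finsupp.tail h
    rw [Finsupp.tail_cons, Finsupp.tail_cons] at ht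
    exact ⟨h0, ht⟩
  · rintro ⟨rfl, rfl⟩; rfl

lemma finSuccEquiv_monomial_cons (i : ℕ) (m : Fin N →₀ ℕ) (c : k) :
    finSuccEquiv k N (monomial (Finsupp.cons i m) c) =
      Polynomial.monomial i (monomial m c) := by
  apply Polynomial.ext
  intro j
  apply MvPolynomial.ext
  intro m'
  rw [finSuccEquiv_coeff_coeff, MvPolynomial.coeff_monomial, Polynomial.coeff_monomial]
  by_cases hij : i = j
  · subst hij
    simp [MvPolynomial.coeff_monomial, cons_inj_iff]
  · rw [if_neg, if_neg hij]
    · simp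
    · simp [cons_inj_iff, hij]

theorem stmt2' {k : Type*} [Field k] {N : ℕ} (τ : MonomialOrder (Fin (N + 1)))
    (τ₀ : MonomialOrder (Fin N)) (helim : IsElimOrder τ) (hind : InducedOrder τ τ₀)
    (I : Ideal (MvPolynomial (Fin (N + 1)) k)) (p : ℕ) :
    Ideal.span (pelimSet (initialIdeal τ I) p) =
      initialIdeal τ₀ (Ideal.span (pelimSet I p)) := by
  apply le_antisymm
  · -- K_p(in I) ⊆ in(K_p(I))
    apply Ideal.span_le.2
    rintro h hh
    rcases hh with rfl | ⟨g, hgJ, hg0, hgd, hgl⟩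
    · exact Ideal.zero_mem _
    have hcoeff : (finSuccEquiv k N g).coeff p = h := by
      rw [← hgd, ← Polynomial.leadingCoeff, hgl]
    rw [← support_sum_monomial_coeff h]
    apply Ideal.sum_mem
    intro m hm
    have hcons : Finsupp.cons p m ∈ g.support := by
      rw [← mem_support_coeff_finSuccEquiv, hcoeff]
      exact hm
    rw [initialIdeal_eq_span_image] at hgJ
    obtain ⟨s, ⟨f, hfI, hf0, rfl⟩, hle⟩ :=
      mem_ideal_span_monomial_image.1 hgJ _ hcons
    set F := finSuccEquiv k N f with hF
    set q := F.natDegree with hq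
    set hf := F.leadingCoeff with hhf
    have hF0 : F ≠ 0 := finSuccEquiv_ne_zero hf0
    have hhf0 : hf ≠ 0 := Polynomial.leadingCoeff_ne_zero.2 hF0
    have hldegf : ldeg τ f = Finsupp.cons q (ldeg τ₀ hf) := ldeg_cons helim hind hf0
    rw [hldegf] at hle
    have hle' := Finsupp.le_def.1 hle
    have hqp : q ≤ p := by
      have := hle' 0
      rwa [Finsupp.cons_zero, Finsupp.cons_zero] at this
    have hml : ldeg τ₀ hf ≤ m := by
      apply Finsupp.le_def.2
      intro j
      have := hle' j.succ
      rwa [Finsupp.cons_succ, Finsupp.cons_succ] at this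
    -- f' = X 0 ^ (p - q) * f witnesses hf ∈ pelimSet I p
    have key : finSuccEquiv k N (X 0 ^ (p - q) * f) =
        Polynomial.X ^ (p - q) * F := by
      rw [map_mul, map_pow, finSuccEquiv_X_zero]
    have hXpow : (Polynomial.X : Polynomial (MvPolynomial (Fin N) k)) ^ (p - q) ≠ 0 :=
      pow_ne_zero _ Polynomial.X_ne_zero
    have hf'0 : X 0 ^ (p - q) * f ≠ 0 := by
      intro h0
      rw [h0, map_zero] at key
      exact (mul_ne_zero hXpow hF0) key.symm
    have hf'd : (finSuccEquiv k N (X 0 ^ (p - q) * f)).natDegree = p := by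
      rw [key, Polynomial.natDegree_mul hXpow hF0, Polynomial.natDegree_X_pow, ← hq,
        Nat.sub_add_cancel hqp]
    have hf'l : (finSuccEquiv k N (X 0 ^ (p - q) * f)).leadingCoeff = hf := by
      rw [key, Polynomial.leadingCoeff_mul, Polynomial.leadingCoeff_X_pow, one_mul]
    have hfmem : hf ∈ pelimSet I p :=
      Or.inr ⟨X 0 ^ (p - q) * f, I.mul_mem_left _ hfI, hf'0, hf'd, hf'l⟩
    have hgen : (monomial (ldeg τ₀ hf) (1 : k)) ∈
        initialIdeal τ₀ (Ideal.span (pelimSet I p)) :=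
      Ideal.subset_span ⟨hf, Ideal.subset_span hfmem, hhf0, rfl⟩
    have : monomial m (coeff m h) =
        monomial (m - ldeg τ₀ hf) (coeff m h) * monomial (ldeg τ₀ hf) 1 := by
      rw [monomial_mul, mul_one, tsub_add_cancel_of_le hml]
    rw [this]
    exact Ideal.mul_mem_left _ _ hgen
  · -- in(K_p(I)) ⊆ K_p(in I)
    apply Ideal.span_le.2
    rintro q ⟨h, hhmem, hh0, rfl⟩
    have hset := mem_pelimSet_of_mem_span hhmem
    rcases hset with rfl | ⟨f, hfI, hf0, hfd, hfl⟩
    · exact absurd rfl hh0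
    have hldeg : ldeg τ f = Finsupp.cons p (ldeg τ₀ h) := by
      rw [ldeg_cons helim hind hf0, hfd, hfl]
    have hgJ : (monomial (ldeg τ f) (1 : k)) ∈ initialIdeal τ I :=
      Ideal.subset_span ⟨f, hfI, hf0, rfl⟩
    have hmono0 : (monomial (ldeg τ₀ h) (1 : k)) ≠ 0 := by
      simp [MvPolynomial.monomial_eq_zero]
    have key : finSuccEquiv k N (monomial (ldeg τ f) (1 : k)) =
        Polynomial.monomial p (monomial (ldeg τ₀ h) (1 : k)) := by
      rw [hldeg, finSuccEquiv_monomial_cons]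
    have hg0 : (monomial (ldeg τ f) (1 : k)) ≠ 0 := by
      simp [MvPolynomial.monomial_eq_zero]
    have hgd : (finSuccEquiv k N (monomial (ldeg τ f) (1 : k))).natDegree = p := by
      classical
      rw [key, Polynomial.natDegree_monomial, if_neg hmono0]
    have hgl : (finSuccEquiv k N (monomial (ldeg τ f) (1 : k))).leadingCoeff =
        monomial (ldeg τ₀ h) (1 : k) := by
      rw [key, Polynomial.leadingCoeff_monomial]
    exact Ideal.subset_span
      (Or.inr ⟨monomial (ldeg τ f) (1 : k), hgJ, hg0, hgd, hgl⟩)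

end PelimAux

/-- Taking partial elimination ideals commutes with taking initial ideals:
`K_p(in_τ(I)) = in_{τ₀}(K_p(I))` for a homogeneous ideal `I` and an elimination order `τ`
for `x₀` inducing `τ₀`. -/
theorem stmt2 {k : Type*} [Field k] {N : ℕ} (τ : MonomialOrder (Fin (N + 1)))
    (τ₀ : MonomialOrder (Fin N)) (helim : IsElimOrder τ) (hind : InducedOrder τ τ₀)
    (I : Ideal (MvPolynomial (Fin (N + 1)) k)) (hI : IsHomogeneousIdeal I) (p : ℕ) :
    Ideal.span (pelimSet (initialIdeal τ I) p) =
      initialIdeal τ₀ (Ideal.span (pelimSet I p)) := by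
  exact PelimAux.stmt2' τ τ₀ helim hind I p
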